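/- Let P be a class of groups closed under quotients (images of surjective group homomorphisms). If G belongs to P and H is a subgroup of G, then dom_G^P(H) is contained in the normal closure of H in G, i.e. in the subgroup H[H,G] generated by H together with all commutators [h,g] with h ∈ H, g ∈ G. -/

import Mathlib

universe u v

/-- The dominion of a subgroup `H` of `G` in the class of groups `P`. -/
def dominion {G : Type v} [Group G] (P : (K : Type u) → [Group K] → Prop)
    (H : Subgroup G) : Set G :=
  {a : G | ∀ (K : Type u) [Group K], P K → ∀ f g : G →* K,
    (∀ h ∈ H, f h = g h) → f a = g a}

open scoped commutatorElement in
lemma normalClosure_le_sup_commutator {G : Type u} [Group G] (H : Subgroup G) :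
    Subgroup.normalClosure (H : Set G) ≤ H ⊔ ⁅H, (⊤ : Subgroup G)⁆ := by
  apply (Subgroup.closure_le _).mpr
  intro x hx
  obtain ⟨h, hh, hc⟩ := Group.mem_conjugatesOfSet_iff.mp hx
  obtain ⟨c, hc⟩ := hc
  set d := (c : G) with hd
  have hx' : x = h * ⁅h⁻¹, d⁆ := by
    have h1 : d * h = x * d := hc
    have hxe : x = d * h * d⁻¹ := by
      rw [h1]; group
    rw [hxe, commutatorElement_def]; group
  rw [hx']
  exact Subgroup.mul_mem _ (Subgroup.mem_sup_left hh)
    (Subgroup.mem_sup_right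
      (Subgroup.commutator_mem_commutator (Subgroup.inv_mem _ hh) (Subgroup.mem_top _)))

theorem dominion_le_normalClosure {G : Type u} [Group G]
    (P : (K : Type u) → [Group K] → Prop)
    (hquot : ∀ (A B : Type u) [Group A] [Group B] (φ : A →* B),
      Function.Surjective φ → P A → P B)
    (hG : P G) (H : Subgroup G) :
    dominion P H ⊆ ((H ⊔ ⁅H, (⊤ : Subgroup G)⁆ : Subgroup G) : Set G) := by
  intro a ha
  set M := Subgroup.normalClosure (H : Set G) with hM
  have hq : P (G ⧸ M) := hquot G (G ⧸ M) (QuotientGroup.mk' M)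
    (QuotientGroup.mk'_surjective M) hG
  have key := ha (G ⧸ M) hq (QuotientGroup.mk' M) 1 ?_
  · have : a ∈ M := by
      have : (QuotientGroup.mk' M) a = 1 := by simpa using key
      exact (QuotientGroup.eq_one_iff a).mp this
    exact normalClosure_le_sup_commutator H this
  · intro h hh
    have : h ∈ M := Subgroup.subset_normalClosure hh
    simp [QuotientGroup.eq_one_iff, this]
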